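/- Let C be a tensor category over an algebraically closed field k, let I be a small category, let F, G : I → C be functors, and let V, W be objects of C. If f₁, …, f_m ∈ Nat(F, G) are linearly independent natural transformations and c₁, …, c_m : V → W are morphisms such that for every object X of I, Σᵢ cᵢ ⊗ (fᵢ)_X = 0 as a morphism V ⊗ F(X) → W ⊗ G(X), then cᵢ = 0 for all i. -/

import Mathlib

open CategoryTheory CategoryTheory.MonoidalCategory CategoryTheory.Limits

noncomputable section

variable (k : Type*) [Field k] [IsAlgClosed k]
variable {C : Type*} [Category C] [Abelian C] [Linear k C]
  [MonoidalCategory C] [MonoidalPreadditive C] [MonoidalLinear k C]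
  [RigidCategory C] [Simple (𝟙_ C)]
  [∀ X : C, IsArtinianObject X]
  [∀ X Y : C, FiniteDimensional k (X ⟶ Y)]

attribute [local instance] CategoryTheory.Abelian.hasFiniteBiproducts

lemma aux_unit_indep {m : ℕ} {D A B : C} (u : Fin m → (𝟙_ C ⟶ D))
    (hu : LinearIndependent k u) (h : Fin m → (A ⟶ B))
    (hh : ∑ i, u i ⊗ₘ h i = 0) : ∀ i, h i = 0 := by
  classical
  set U : (⨁ fun _ : Fin m => 𝟙_ C) ⟶ D := biproduct.desc u with hUdef
  have hkerz : IsZero (kernel U) := by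
    by_contra hK
    set S := simpleSubobject hK
    have hS : Simple S := by infer_instance
    set t : S ⟶ ⨁ fun _ : Fin m => 𝟙_ C := simpleSubobjectArrow hK ≫ kernel.ι U with ht
    have htU : t ≫ U = 0 := by simp [ht, kernel.condition]
    have htne : t ≠ 0 := by
      intro e
      have : 𝟙 S = 0 := by
        have : Mono t := mono_comp _ _
        rw [← cancel_mono t, e, Category.id_comp, zero_comp]
      exact id_nonzero S this
    obtain ⟨j, hj⟩ : ∃ j, t ≫ biproduct.π _ j ≠ 0 := by
      by_contra hc
      push_neg at hc
      exact htne (biproduct.hom_ext _ _ fun j => by rw [hc j, zero_comp])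
    have : IsIso (t ≫ biproduct.π _ j) := isIso_of_hom_simple hj
    set w : 𝟙_ C ⟶ ⨁ fun _ : Fin m => 𝟙_ C := inv (t ≫ biproduct.π _ j) ≫ t with hw
    have hwU : w ≫ U = 0 := by rw [hw, Category.assoc, htU, comp_zero]
    choose a ha using fun i => endomorphism_simple_eq_smul_id k (w ≫ biproduct.π _ i)
    have hsum : ∑ i, a i • u i = 0 := by
      have e1 : ∀ i, a i • u i = (w ≫ biproduct.π (fun _ : Fin m => 𝟙_ C) i) ≫
          (biproduct.ι (fun _ : Fin m => 𝟙_ C) i ≫ U) := by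
        intro i
        rw [← ha i]
        simp [hUdef, Linear.smul_comp]
      rw [Finset.sum_congr rfl fun i _ => e1 i]
      have e2 : ∑ i, (w ≫ biproduct.π (fun _ : Fin m => 𝟙_ C) i) ≫
          (biproduct.ι (fun _ : Fin m => 𝟙_ C) i ≫ U) =
          (w ≫ ∑ i, biproduct.π (fun _ : Fin m => 𝟙_ C) i ≫
            biproduct.ι (fun _ : Fin m => 𝟙_ C) i) ≫ U := by
        rw [Preadditive.comp_sum, Preadditive.sum_comp]
        simp [Category.assoc]
      rw [e2, biproduct.total, Category.comp_id, hwU]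
    have haz := Fintype.linearIndependent_iff.mp hu a hsum
    have hwj : w ≫ biproduct.π (fun _ : Fin m => 𝟙_ C) j = 0 := by
      rw [← ha j, haz j, zero_smul]
    rw [hw, Category.assoc, IsIso.inv_comp_eq, comp_zero] at hwj
    exact hj hwj
  have hU : Mono U := by
    refine Preadditive.mono_of_cancel_zero _ fun g hg => ?_
    rw [← kernel.lift_ι U g hg, hkerz.eq_zero_of_src (kernel.ι U), comp_zero]
  have : (tensorRight B).PreservesMonomorphisms :=
    Functor.preservesMonomorphisms_of_adjunction (tensorRightAdjunction (ᘁB) B)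
  have hUB : Mono (U ▷ B) := by
    have := (tensorRight B).map_mono U
    simpa using this
  have key : (∑ i, (biproduct.ι (fun _ : Fin m => 𝟙_ C) i ⊗ₘ h i)) ≫ (U ▷ B) = 0 := by
    rw [Preadditive.sum_comp]
    calc ∑ i, (biproduct.ι (fun _ : Fin m => 𝟙_ C) i ⊗ₘ h i) ≫ (U ▷ B)
        = ∑ i, u i ⊗ₘ h i := by
          refine Finset.sum_congr rfl fun i _ => ?_
          rw [← tensorHom_id, tensorHom_comp_tensorHom, Category.comp_id, hUdef, biproduct.ι_desc]
      _ = 0 := hh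
  have hz : ∑ i, (biproduct.ι (fun _ : Fin m => 𝟙_ C) i ⊗ₘ h i) = 0 :=
    zero_of_comp_mono (U ▷ B) key
  intro j
  have hj := congrArg (· ≫ (biproduct.π (fun _ : Fin m => 𝟙_ C) j ▷ B)) hz
  simp only [Preadditive.sum_comp, zero_comp] at hj
  have hterm : ∀ i, (biproduct.ι (fun _ : Fin m => 𝟙_ C) i ⊗ₘ h i) ≫
      (biproduct.π (fun _ : Fin m => 𝟙_ C) j ▷ B) =
      if i = j then (𝟙 (𝟙_ C) ⊗ₘ h i) else 0 := by
    intro i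
    rw [← tensorHom_id, tensorHom_comp_tensorHom, Category.comp_id, biproduct.ι_π]
    split_ifs with hij
    · subst hij; simp
    · simp
  rw [Finset.sum_congr rfl fun i _ => hterm i] at hj
  simp only [Finset.sum_ite_eq', Finset.mem_univ, if_true] at hj
  have : h j = (λ_ A).inv ≫ (𝟙 (𝟙_ C) ⊗ₘ h j) ≫ (λ_ B).hom := by
    simp
  rw [this, hj, zero_comp, comp_zero]

lemma phi_eq {V W : C} (d : V ⟶ W) :
    η_ (ᘁV) V ≫ ((ᘁV : C) ◁ d) =
      (tensorLeftHomEquiv (𝟙_ C) (ᘁV) V W) ((ρ_ V).hom ≫ d) := by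
  dsimp [tensorLeftHomEquiv]
  monoidal

lemma tensor_conj {V W A B : C} (d : V ⟶ W) (h : A ⟶ B) :
    (η_ (ᘁV) V ≫ ((ᘁV : C) ◁ d)) ⊗ₘ h =
      (η_ (ᘁV : C) V ▷ A) ≫ (α_ (ᘁV : C) V A).hom ≫ ((ᘁV : C) ◁ (d ⊗ₘ h)) ≫ (α_ (ᘁV : C) W B).inv := by
  conv_lhs => rw [show h = 𝟙 A ≫ h from (Category.id_comp h).symm]
  rw [← tensorHom_comp_tensorHom, tensorHom_id]
  congr 1
  have hnat := associator_naturality (𝟙 (ᘁV : C)) d h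
  rw [id_tensorHom, id_tensorHom] at hnat
  rw [← Category.assoc, ← hnat, Category.assoc, Iso.hom_inv_id, Category.comp_id]

lemma aux_hom_indep {m : ℕ} {V W A B : C} (d : Fin m → (V ⟶ W))
    (hd : LinearIndependent k d) (h : Fin m → (A ⟶ B))
    (hh : ∑ i, d i ⊗ₘ h i = 0) : ∀ i, h i = 0 := by
  let Φ : (V ⟶ W) →ₗ[k] (𝟙_ C ⟶ (ᘁV : C) ⊗ W) :=
    { toFun := fun e => η_ (ᘁV) V ≫ ((ᘁV : C) ◁ e)
      map_add' := fun x y => by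
        rw [MonoidalPreadditive.whiskerLeft_add, Preadditive.comp_add]
      map_smul' := fun r x => by
        rw [MonoidalLinear.whiskerLeft_smul, Linear.comp_smul, RingHom.id_apply] }
  have hinj : Function.Injective Φ := by
    intro x y hxy
    simp only [Φ, LinearMap.coe_mk, AddHom.coe_mk] at hxy
    rw [phi_eq, phi_eq] at hxy
    have h2 := (tensorLeftHomEquiv (𝟙_ C) (ᘁV) V W).injective hxy
    rwa [cancel_epi] at h2
  have hu : LinearIndependent k (fun i => Φ (d i)) :=
    hd.map' Φ (LinearMap.ker_eq_bot.mpr hinj)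
  have hsum : ∑ i, (Φ (d i)) ⊗ₘ h i = 0 := by
    have e1 : ∀ i, (Φ (d i)) ⊗ₘ h i =
        (η_ (ᘁV : C) V ▷ A) ≫ (α_ (ᘁV : C) V A).hom ≫
          ((ᘁV : C) ◁ (d i ⊗ₘ h i)) ≫ (α_ (ᘁV : C) W B).inv := fun i => tensor_conj _ _
    rw [Finset.sum_congr rfl fun i _ => e1 i]
    have e2 : ∑ i, (η_ (ᘁV : C) V ▷ A) ≫ (α_ (ᘁV : C) V A).hom ≫
          ((ᘁV : C) ◁ (d i ⊗ₘ h i)) ≫ (α_ (ᘁV : C) W B).inv =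
        (η_ (ᘁV : C) V ▷ A) ≫ (α_ (ᘁV : C) V A).hom ≫
          ((ᘁV : C) ◁ (∑ i, d i ⊗ₘ h i)) ≫ (α_ (ᘁV : C) W B).inv := by
      rw [whiskerLeft_sum, Preadditive.sum_comp, Preadditive.comp_sum, Preadditive.comp_sum]
    rw [e2, hh, MonoidalPreadditive.whiskerLeft_zero, zero_comp, comp_zero, comp_zero]
  exact aux_unit_indep k _ hu h hsum

lemma smul_tensor'' {V W A B : C} (r : k) (e : V ⟶ W) (x : A ⟶ B) :
    (r • e) ⊗ₘ x = r • (e ⊗ₘ x) := by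
  rw [MonoidalCategory.tensorHom_def, MonoidalLinear.smul_whiskerRight, Linear.smul_comp, ← MonoidalCategory.tensorHom_def]

lemma tensor_smul'' {V W A B : C} (r : k) (e : V ⟶ W) (x : A ⟶ B) :
    e ⊗ₘ (r • x) = r • (e ⊗ₘ x) := by
  rw [MonoidalCategory.tensorHom_def, MonoidalLinear.whiskerLeft_smul, Linear.comp_smul, ← MonoidalCategory.tensorHom_def]

theorem tensor_natTrans_lin_indep'
    {I : Type*} [SmallCategory I] (F G : I ⥤ C) (V W : C)
    {m : ℕ} (f : Fin m → (F ⟶ G)) (hf : LinearIndependent k f)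
    (c : Fin m → (V ⟶ W))
    (h : ∀ X : I, ∑ i, (c i ⊗ₘ (f i).app X) = 0) :
    ∀ i, c i = 0 := by
  classical
  have hfin : FiniteDimensional k (Submodule.span k (Set.range c)) :=
    FiniteDimensional.span_of_finite k (Set.finite_range c)
  set M := Submodule.span k (Set.range c) with hM
  let b := Module.finBasis k M
  set n := Module.finrank k M with hn
  let d : Fin n → (V ⟶ W) := fun j => (b j : V ⟶ W)
  have hd : LinearIndependent k d := b.linearIndependent.map' M.subtype M.ker_subtype
  let cM : Fin m → M := fun i => ⟨c i, Submodule.subset_span (Set.mem_range_self i)⟩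
  let a : Fin m → Fin n → k := fun i j => b.repr (cM i) j
  have hc : ∀ i, c i = ∑ j, a i j • d j := by
    intro i
    calc c i = ((cM i : M) : V ⟶ W) := rfl
      _ = ((∑ j, b.repr (cM i) j • b j : M) : V ⟶ W) := by rw [b.sum_repr]
      _ = ∑ j, a i j • d j := by
          simp [d, a, AddSubmonoidClass.coe_finset_sum, -Module.Basis.sum_repr]
  let g : Fin n → (F ⟶ G) := fun j => ∑ i, a i j • f i
  have hg : ∀ X : I, ∀ j, (g j).app X = 0 := by
    intro X
    apply aux_hom_indep k d hd (fun j => (g j).app X)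
    have e : ∑ j, d j ⊗ₘ (g j).app X = ∑ i, c i ⊗ₘ (f i).app X := by
      calc ∑ j, d j ⊗ₘ (g j).app X
          = ∑ j, ∑ i, a i j • (d j ⊗ₘ (f i).app X) := by
            refine Finset.sum_congr rfl fun j _ => ?_
            have : (g j).app X = ∑ i, a i j • (f i).app X := by
              simp [g, NatTrans.app_sum, NatTrans.app_smul]
            rw [this, tensor_sum]
            exact Finset.sum_congr rfl fun i _ => tensor_smul'' k _ _ _
        _ = ∑ i, ∑ j, a i j • (d j ⊗ₘ (f i).app X) := Finset.sum_comm
        _ = ∑ i, c i ⊗ₘ (f i).app X := by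
            refine Finset.sum_congr rfl fun i _ => ?_
            rw [hc i, sum_tensor]
            exact Finset.sum_congr rfl fun j _ => (smul_tensor'' k _ _ _).symm
    rw [e, h X]
  have hg0 : ∀ j, g j = 0 := by
    intro j
    ext X
    exact hg X j
  have ha0 : ∀ i j, a i j = 0 := by
    intro i j
    have hz : ∑ i, a i j • f i = 0 := hg0 j
    exact Fintype.linearIndependent_iff.mp hf _ hz i
  intro i
  rw [hc i]
  simp [ha0]


end

/-- Let `C` be a tensor category over an algebraically closed field `k`,
`F G : I ⥤ C` functors from a small category, and `V, W` objects of `C`. If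
`f₁, …, f_m : F ⟶ G` are linearly independent natural transformations and
`c₁, …, c_m : V ⟶ W` are morphisms with `∑ i, cᵢ ⊗ₘ (fᵢ)_X = 0` for every `X`, then
all `cᵢ` vanish. -/
theorem tensor_natTrans_lin_indep
    (k : Type*) [Field k] [IsAlgClosed k]
    {C : Type*} [Category C] [Abelian C] [Linear k C]
    [MonoidalCategory C] [MonoidalPreadditive C] [MonoidalLinear k C]
    [RigidCategory C] [Simple (𝟙_ C)]
    [∀ X : C, IsNoetherianObject X] [∀ X : C, IsArtinianObject X]
    [∀ X Y : C, FiniteDimensional k (X ⟶ Y)]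
    {I : Type*} [SmallCategory I] (F G : I ⥤ C) (V W : C)
    {m : ℕ} (f : Fin m → (F ⟶ G)) (hf : LinearIndependent k f)
    (c : Fin m → (V ⟶ W))
    (h : ∀ X : I, ∑ i, (c i ⊗ₘ (f i).app X) = 0) :
    ∀ i, c i = 0 := by
  exact tensor_natTrans_lin_indep' k F G V W f hf c h
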